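/- Under the orthonormal-features setting (each feature vector φ(s,a) equals some element of an orthonormal set {q_i}_{i=1}^d), the empirical operator Ĝ with regularizer λ ≥ 1 is a (t/(t+λ))-contraction in the norm ‖Q̃ᵀ·‖_∞: for all w₁, w₂ ∈ ℝ^d, ‖Q̃ᵀ(Ĝw₁ − Ĝw₂)‖_∞ ≤ (t/(t+λ))·‖Q̃ᵀ(w₁ − w₂)‖_∞, provided the per-state nonlinearity g satisfies |g(s,w₁) − g(s,w₂)| ≤ ‖Q̃ᵀ(w₁ − w₂)‖_∞ for every s. -/

import Mathlib

open Matrix BigOperators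

theorem stmt_16 {S : Type*} {d t : ℕ} (lam : ℝ) (hlam : 1 ≤ lam)
    (q : Fin d → Fin d → ℝ)
    (hq : ∀ i j, q i ⬝ᵥ q j = if i = j then (1 : ℝ) else 0)
    (ι : Fin t → Fin d) (φ : Fin t → Fin d → ℝ) (hφ : ∀ τ, φ τ = q (ι τ))
    (cost : Fin t → ℝ) (s' : Fin t → S)
    (g : S → (Fin d → ℝ) → ℝ)
    (hg : ∀ s (w₁ w₂ : Fin d → ℝ),
      |g s w₁ - g s w₂| ≤ ‖(fun i => q i ⬝ᵥ (w₁ - w₂))‖)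
    (Λ : Matrix (Fin d) (Fin d) ℝ)
    (hΛ : Λ = lam • (1 : Matrix (Fin d) (Fin d) ℝ) +
      ∑ τ : Fin t, Matrix.vecMulVec (φ τ) (φ τ))
    (G : (Fin d → ℝ) → Fin d → ℝ)
    (hG : ∀ w, G w = Λ⁻¹ *ᵥ ∑ τ : Fin t, (cost τ + g (s' τ) w) • φ τ) :
    ∀ w₁ w₂ : Fin d → ℝ,
      ‖(fun i => q i ⬝ᵥ (G w₁ - G w₂))‖ ≤
        (t / (t + lam)) * ‖(fun i => q i ⬝ᵥ (w₁ - w₂))‖ := by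
  intro w₁ w₂
  have hlam0 : (0:ℝ) < lam := lt_of_lt_of_le one_pos hlam
  -- multiplicity of q i among the features
  set dd : Fin d → ℝ :=
    fun i => ((Finset.univ.filter fun τ : Fin t => ι τ = i).card : ℝ) with hdd
  have hddnn : ∀ i, 0 ≤ dd i := fun i => Nat.cast_nonneg _
  have hddle : ∀ i, dd i ≤ (t : ℝ) := by
    intro i
    have := Finset.card_filter_le (Finset.univ : Finset (Fin t)) (fun τ => ι τ = i)
    simpa [hdd] using (Nat.cast_le (α := ℝ)).mpr (this.trans (le_of_eq (Finset.card_univ)))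
  have hpos : ∀ i, 0 < lam + dd i := fun i => by
    have := hddnn i; linarith
  -- helper lemmas
  have hdps : ∀ (m : ℕ) (F : Fin m → Fin d → ℝ) (v : Fin d → ℝ),
      v ⬝ᵥ (∑ k : Fin m, F k) = ∑ k : Fin m, v ⬝ᵥ F k := by
    intro m F v
    simp only [dotProduct, Finset.sum_apply, Finset.mul_sum]
    rw [Finset.sum_comm]
  have hsum_mv : ∀ (m : ℕ) (F : Fin m → Matrix (Fin d) (Fin d) ℝ) (x : Fin d → ℝ),
      (∑ k : Fin m, F k) *ᵥ x = ∑ k : Fin m, F k *ᵥ x := by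
    intro m F x
    ext j
    simp only [mulVec, dotProduct, Matrix.sum_apply, Finset.sum_apply, Finset.sum_mul]
    rw [Finset.sum_comm]
  have hvm : ∀ (a b x : Fin d → ℝ), vecMulVec a b *ᵥ x = (b ⬝ᵥ x) • a := by
    intro a b x
    ext i
    simp [mulVec, vecMulVec_apply, dotProduct, Finset.mul_sum, Finset.sum_mul]
    apply Finset.sum_congr rfl; intros; ring
  have hmvm : ∀ (A : Matrix (Fin d) (Fin d) ℝ) (a b : Fin d → ℝ),
      A * vecMulVec a b = vecMulVec (A *ᵥ a) b := by
    intro A a b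
    ext j k
    simp [mul_apply, vecMulVec_apply, mulVec, dotProduct, Finset.sum_mul, mul_assoc]
  have hsvm : ∀ (c : ℝ) (a b : Fin d → ℝ),
      vecMulVec (c • a) b = c • vecMulVec a b := by
    intro c a b
    ext j k
    simp [vecMulVec_apply, mul_assoc]
  -- Λ acts on q i as multiplication by lam + dd i
  have hΛq : ∀ i, Λ *ᵥ q i = (lam + dd i) • q i := by
    intro i
    rw [hΛ, add_mulVec, hsum_mv]
    have h1 : (lam • (1 : Matrix (Fin d) (Fin d) ℝ)) *ᵥ q i = lam • q i := by
      rw [Matrix.smul_mulVec, Matrix.one_mulVec]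
    have h2 : ∀ τ : Fin t, vecMulVec (φ τ) (φ τ) *ᵥ q i
        = if ι τ = i then q i else 0 := by
      intro τ
      rw [hφ, hvm]
      rcases eq_or_ne (ι τ) i with h | h
      · simp [h, hq i i]
      · rw [dotProduct_comm, hq]
        simp [h, Ne.symm h]
    rw [h1]
    have h3 : (∑ τ : Fin t, vecMulVec (φ τ) (φ τ) *ᵥ q i) = dd i • q i := by
      calc (∑ τ : Fin t, vecMulVec (φ τ) (φ τ) *ᵥ q i)
          = ∑ τ : Fin t, (if ι τ = i then q i else 0) := by
            exact Finset.sum_congr rfl fun τ _ => h2 τ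
        _ = ∑ τ ∈ Finset.univ.filter (fun τ : Fin t => ι τ = i), q i := by
            rw [Finset.sum_filter]
        _ = dd i • q i := by
            rw [Finset.sum_const]
            ext x
            simp [hdd]
    rw [h3, add_smul]
  -- the explicit inverse of Λ
  set B : Matrix (Fin d) (Fin d) ℝ :=
    ∑ i : Fin d, (lam + dd i)⁻¹ • vecMulVec (q i) (q i) with hB
  have hsumvv : (∑ i : Fin d, vecMulVec (q i) (q i)) = 1 := by
    have h1 : (Matrix.of q) * (Matrix.of q)ᵀ = 1 := by
      ext i j
      simpa [mul_apply, dotProduct, Matrix.one_apply] using hq i j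
    have h2 : (Matrix.of q)ᵀ * (Matrix.of q) = 1 := mul_eq_one_comm.mp h1
    calc (∑ i : Fin d, vecMulVec (q i) (q i)) = (Matrix.of q)ᵀ * (Matrix.of q) := by
          ext j k
          simp [Matrix.sum_apply, vecMulVec_apply, mul_apply, mul_comm]
      _ = 1 := h2
  have hΛB : Λ * B = 1 := by
    rw [hB, Finset.mul_sum]
    calc (∑ i : Fin d, Λ * ((lam + dd i)⁻¹ • vecMulVec (q i) (q i)))
        = ∑ i : Fin d, vecMulVec (q i) (q i) := by
          apply Finset.sum_congr rfl
          intro i _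
          rw [Matrix.mul_smul, hmvm, hΛq, hsvm, smul_smul,
            inv_mul_cancel₀ (hpos i).ne']
          simp
      _ = 1 := hsumvv
  have hinv : Λ⁻¹ = B := Matrix.inv_eq_right_inv hΛB
  -- the difference
  set δ : Fin t → ℝ := fun τ => g (s' τ) w₁ - g (s' τ) w₂ with hδ
  set y : Fin d → ℝ := ∑ τ : Fin t, δ τ • q (ι τ) with hy
  have hsumy : (∑ x : Fin t,
      ((cost x + g (s' x) w₁) • φ x - (cost x + g (s' x) w₂) • φ x)) = y := by
    rw [hy]
    apply Finset.sum_congr rfl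
    intro τ _
    rw [hφ, ← sub_smul]
    congr 1
    show _ = g (s' τ) w₁ - g (s' τ) w₂
    ring
  have hu : G w₁ - G w₂ = B *ᵥ y := by
    rw [hG, hG, hinv, ← Matrix.mulVec_sub, ← Finset.sum_sub_distrib, hsumy]
  set K : ℝ := ‖(fun i => q i ⬝ᵥ (w₁ - w₂))‖ with hK
  have hK0 : 0 ≤ K := norm_nonneg _
  have hδK : ∀ τ, |δ τ| ≤ K := fun τ => hg (s' τ) w₁ w₂
  -- computing q i ⬝ᵥ (B *ᵥ y)
  have hqy : ∀ i, q i ⬝ᵥ y = ∑ τ ∈ Finset.univ.filter (fun τ : Fin t => ι τ = i), δ τ := by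
    intro i
    rw [hy, hdps, Finset.sum_filter]
    apply Finset.sum_congr rfl
    intro τ _
    rw [dotProduct_smul, hq]
    rcases eq_or_ne (ι τ) i with h | h
    · simp [h]
    · simp [h, Ne.symm h]
  have hqBy : ∀ i, q i ⬝ᵥ (B *ᵥ y) = (lam + dd i)⁻¹ * (q i ⬝ᵥ y) := by
    intro i
    rw [hB, hsum_mv, hdps]
    have key : ∀ j : Fin d, q i ⬝ᵥ (((lam + dd j)⁻¹ • vecMulVec (q j) (q j)) *ᵥ y)
        = if j = i then (lam + dd i)⁻¹ * (q i ⬝ᵥ y) else 0 := by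
      intro j
      rw [Matrix.smul_mulVec, hvm, dotProduct_smul, dotProduct_smul, hq]
      rcases eq_or_ne j i with h | h
      · subst h
        simp [smul_eq_mul]
      · simp [h, Ne.symm h]
    rw [Finset.sum_congr rfl fun j _ => key j]
    simp
  -- per-coordinate bound
  have hbound : ∀ i, |q i ⬝ᵥ (G w₁ - G w₂)| ≤ (t / (t + lam)) * K := by
    intro i
    rw [hu, hqBy, hqy]
    have h1 : |∑ τ ∈ Finset.univ.filter (fun τ : Fin t => ι τ = i), δ τ| ≤ dd i * K := by
      calc |∑ τ ∈ Finset.univ.filter (fun τ : Fin t => ι τ = i), δ τ|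
          ≤ ∑ τ ∈ Finset.univ.filter (fun τ : Fin t => ι τ = i), |δ τ| :=
            Finset.abs_sum_le_sum_abs _ _
        _ ≤ ∑ τ ∈ Finset.univ.filter (fun τ : Fin t => ι τ = i), K :=
            Finset.sum_le_sum fun τ _ => hδK τ
        _ = dd i * K := by rw [Finset.sum_const, hdd]; simp [mul_comm]
    have h2 : |(lam + dd i)⁻¹ * ∑ τ ∈ Finset.univ.filter (fun τ : Fin t => ι τ = i), δ τ|
        ≤ (lam + dd i)⁻¹ * (dd i * K) := by
      rw [abs_mul, abs_of_nonneg (inv_nonneg.mpr (hpos i).le)]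
      exact mul_le_mul_of_nonneg_left h1 (inv_nonneg.mpr (hpos i).le)
    refine h2.trans ?_
    have h3 : (lam + dd i)⁻¹ * dd i ≤ t / (t + lam) := by
      rw [inv_mul_eq_div, div_le_div_iff₀ (hpos i) (by positivity)]
      have := hddle i
      have := hddnn i
      nlinarith
    calc (lam + dd i)⁻¹ * (dd i * K) = ((lam + dd i)⁻¹ * dd i) * K := by ring
      _ ≤ (t / (t + lam)) * K := mul_le_mul_of_nonneg_right h3 hK0
  have hc : 0 ≤ (t / (t + lam)) * K := by positivity
  rw [pi_norm_le_iff_of_nonneg hc]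
  intro i
  simpa [Real.norm_eq_abs] using hbound i
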